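/- Quasi-periodicity of the explicit kernel ϑ in the spectral parameters: for every 1 ≤ j ≤ N and all admissible arguments, ϑ_ε(x₁, …, x_m | ζ₁, …, ζ_j q⁻², …, ζ_N) = s^N · r_ε(ζ_j) · (∏_{μ=1}^{m} (−z_j q⁻¹/x_μ)) · (∏_{k=1, k≠j}^{N} ζ_k/ζ_j) · ϑ_ε(x₁, …, x_m | ζ₁, …, ζ_N), where z_j = ζ_j² and r_ε(ζ) := ε ∏_{k=1}^{N−2m} t(ζ/ξ_k) with t(ζ) = ζ⁻¹ θ(qζ²|q⁴)/θ(qζ⁻²|q⁴). -/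

import Mathlib

noncomputable section

open scoped BigOperators

/-- The infinite q-Pochhammer symbol `(a; p)_∞ = ∏_{k ≥ 0} (1 - a pᵏ)`. -/
def qPoch (a p : ℂ) : ℂ := ∏' k : ℕ, (1 - a * p ^ k)

/-- The double infinite q-Pochhammer symbol `(a; p, p)_∞ = ∏_{k,l ≥ 0} (1 - a p^{k+l})`. -/
def qPoch2 (a p : ℂ) : ℂ := ∏' kl : ℕ × ℕ, (1 - a * p ^ (kl.1 + kl.2))

/-- `θ(z|p) = (z;p)_∞ (p/z;p)_∞`. -/
def theta (z p : ℂ) : ℂ := qPoch z p * qPoch (p / z) p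

/-- `t(ζ) = ζ⁻¹ θ(qζ²|q⁴)/θ(qζ⁻²|q⁴)`. -/
def tfun (q ζ : ℂ) : ℂ := ζ⁻¹ * theta (q * ζ ^ 2) (q ^ 4) / theta (q * (ζ ^ 2)⁻¹) (q ^ 4)

/-- `b(ζ) = (1-ζ²)q/(1-ζ²q²)`. -/
def Rb (q ζ : ℂ) : ℂ := (1 - ζ ^ 2) * q / (1 - ζ ^ 2 * q ^ 2)

/-- `c(ζ) = (1-q²)ζ/(1-ζ²q²)`. -/
def Rc (q ζ : ℂ) : ℂ := (1 - q ^ 2) * ζ / (1 - ζ ^ 2 * q ^ 2)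

/-- The six-vertex R-matrix; the index `0 : Fin 2` encodes `+` and `1 : Fin 2` encodes `−`.
Rows are the upper (outgoing) indices, columns the lower (incoming) indices. -/
def Rmat (q ζ : ℂ) : Matrix (Fin 2 × Fin 2) (Fin 2 × Fin 2) ℂ :=
  Matrix.of fun e f =>
    if e.1 = e.2 then (if f = e then 1 else 0)
    else if f = e then Rb q ζ
    else if f = (e.2, e.1) then Rc q ζ
    else 0

/-- The transposition `P(x⊗y) = y⊗x` on `V ⊗ V`. -/
def Pmat : Matrix (Fin 2 × Fin 2) (Fin 2 × Fin 2) ℂ :=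
  Matrix.of fun e f => if f = (e.2, e.1) then 1 else 0

/-- The scalar factor `S₀(ζ)` with `z = ζ²`. -/
def S0 (q ζ : ℂ) : ℂ :=
  ζ * qPoch (ζ ^ 2)⁻¹ (q ^ 4) * qPoch (ζ ^ 2 * q ^ 2) (q ^ 4) /
    (qPoch (ζ ^ 2) (q ^ 4) * qPoch ((ζ ^ 2)⁻¹ * q ^ 2) (q ^ 4))

/-- The scattering matrix `S(ζ) = S₀(ζ) R(ζ)`. -/
def Smat (q ζ : ℂ) : Matrix (Fin 2 × Fin 2) (Fin 2 × Fin 2) ℂ := S0 q ζ • Rmat q ζ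

/-- Admissibility of the argument of the S-matrix: all denominators occurring in
`S(ζ)` are nonzero. -/
def Sdef (q ζ : ℂ) : Prop :=
  ζ ≠ 0 ∧ 1 - ζ ^ 2 * q ^ 2 ≠ 0 ∧ qPoch (ζ ^ 2) (q ^ 4) ≠ 0 ∧
    qPoch ((ζ ^ 2)⁻¹ * q ^ 2) (q ^ 4) ≠ 0

/-- Kronecker (tensor) product of two operators on `V`. -/
def kron (A B : Matrix (Fin 2) (Fin 2) ℂ) : Matrix (Fin 2 × Fin 2) (Fin 2 × Fin 2) ℂ :=
  Matrix.of fun e f => A e.1 f.1 * B e.2 f.2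

/-- `D = diag(δ, δ⁻¹)`. -/
def Dmat (δ : ℂ) : Matrix (Fin 2) (Fin 2) ℂ :=
  Matrix.of fun i j => if i = j then (if i = 0 then δ else δ⁻¹) else 0

/-- `D̄ = diag(δ, −δ⁻¹)`. -/
def Dbar (δ : ℂ) : Matrix (Fin 2) (Fin 2) ℂ :=
  Matrix.of fun i j => if i = j then (if i = 0 then δ else -δ⁻¹) else 0

/-- The operator on `V^{⊗N}` acting as `M` on the `(j,k)`-th tensor factors and as the
identity elsewhere.  A vector of `V^{⊗N}` is encoded by its coordinates
`(Fin N → Fin 2) → ℂ` in the basis `v_{ε₁} ⊗ ⋯ ⊗ v_{ε_N}`. -/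
def embed2 {N : ℕ} (M : Matrix (Fin 2 × Fin 2) (Fin 2 × Fin 2) ℂ) (j k : Fin N) :
    Matrix (Fin N → Fin 2) (Fin N → Fin 2) ℂ :=
  Matrix.of fun a b =>
    M (a j, a k) (b j, b k) *
      ∏ i : Fin N, (if i = j ∨ i = k then 1 else if a i = b i then 1 else 0)

/-- The operator on `V^{⊗N}` acting as `M` on the `j`-th tensor factor. -/
def embed1 {N : ℕ} (M : Matrix (Fin 2) (Fin 2) ℂ) (j : Fin N) :
    Matrix (Fin N → Fin 2) (Fin N → Fin 2) ℂ :=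
  Matrix.of fun a b =>
    M (a j) (b j) * ∏ i : Fin N, (if i = j then 1 else if a i = b i then 1 else 0)

/-- Number of `−` signs (i.e. of indices equal to `1`) in a basis configuration. -/
def countMinus {N : ℕ} (a : Fin N → Fin 2) : ℕ :=
  (Finset.univ.filter fun i => a i = 1).card

/-- Membership in the weight subspace `V^{(n l)} ⊆ V^{⊗N}` (with `l = N - n`):
the coordinates vanish off configurations with exactly `n` minus signs. -/
def inVnl {N : ℕ} (n : ℕ) (v : (Fin N → Fin 2) → ℂ) : Prop :=
  ∀ a, countMinus a ≠ n → v a = 0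

/-- The vector `w ⊗ u_σ ∈ V^{⊗N}`, where `w ∈ V^{⊗(N-2)}` occupies the slots `0,…,N-3`
and `u_σ = v₋⊗v₊ + σ v₊⊗v₋` occupies the slots `N-2, N-1`. -/
def tensU {N : ℕ} (hN : 2 ≤ N) (σ : ℂ) (w : (Fin (N - 2) → Fin 2) → ℂ) :
    (Fin N → Fin 2) → ℂ :=
  fun a =>
    w (fun i => a ⟨i.1, by have := i.isLt; omega⟩) *
      (if a ⟨N - 2, by omega⟩ = 1 ∧ a ⟨N - 1, by omega⟩ = 0 then 1
       else if a ⟨N - 2, by omega⟩ = 0 ∧ a ⟨N - 1, by omega⟩ = 1 then σ else 0)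

/-- `P₁₂ P₂₃ ⋯ P_{N−1,N}` on `V^{⊗N}` (1-based labels; 0-based sites `0,…,N-1`). -/
def Pchain (N : ℕ) : Matrix (Fin N → Fin 2) (Fin N → Fin 2) ℂ :=
  (List.ofFn fun t : Fin (N - 1) =>
    embed2 Pmat ⟨t.1, by have := t.isLt; omega⟩ ⟨t.1 + 1, by have := t.isLt; omega⟩).prod

/-- `S_{1,…,N−2|N−1}(ζ₁,…,ζ_{N−2}|w) = S_{1,N−1}(ζ₁/w) ⋯ S_{N−2,N−1}(ζ_{N−2}/w)`
(1-based labels; the `j`-th spectral parameter `ζ_j` is `ζ (j-1)`). -/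
def SchainUp (q : ℂ) (N : ℕ) (ζ : ℕ → ℂ) (w : ℂ) :
    Matrix (Fin N → Fin 2) (Fin N → Fin 2) ℂ :=
  (List.ofFn fun t : Fin (N - 2) =>
    embed2 (Smat q (ζ t.1 / w)) ⟨t.1, by have := t.isLt; omega⟩
      ⟨N - 2, by have := t.isLt; omega⟩).prod

/-- `S_{N−1|1,…,N−2}(w|ζ₁,…,ζ_{N−2}) = S_{N−1,N−2}(w/ζ_{N−2}) ⋯ S_{N−1,1}(w/ζ₁)`. -/
def SchainDown (q : ℂ) (N : ℕ) (ζ : ℕ → ℂ) (w : ℂ) :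
    Matrix (Fin N → Fin 2) (Fin N → Fin 2) ℂ :=
  (List.ofFn fun t : Fin (N - 2) =>
    embed2 (Smat q (w / ζ (N - 3 - t.1))) ⟨N - 2, by have := t.isLt; omega⟩
      ⟨N - 3 - t.1, by have := t.isLt; omega⟩).prod

/-- `R_{N−1|1,…,N−2}(w|ζ₁,…,ζ_{N−2}) = R_{N−1,N−2}(w/ζ_{N−2}) ⋯ R_{N−1,1}(w/ζ₁)`. -/
def RchainDown (q : ℂ) (N : ℕ) (ζ : ℕ → ℂ) (w : ℂ) :
    Matrix (Fin N → Fin 2) (Fin N → Fin 2) ℂ :=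
  (List.ofFn fun t : Fin (N - 2) =>
    embed2 (Rmat q (w / ζ (N - 3 - t.1))) ⟨N - 2, by have := t.isLt; omega⟩
      ⟨N - 3 - t.1, by have := t.isLt; omega⟩).prod

/-- `R_{1,…,M−1|M}(ζ₁,…,ζ_{M−1}|w) = R_{1,M}(ζ₁/w) ⋯ R_{M−1,M}(ζ_{M−1}/w)` on `V^{⊗M}`. -/
def RchainUp (q : ℂ) (M : ℕ) (ζ : ℕ → ℂ) (w : ℂ) :
    Matrix (Fin M → Fin 2) (Fin M → Fin 2) ℂ :=
  (List.ofFn fun t : Fin (M - 1) =>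
    embed2 (Rmat q (ζ t.1 / w)) ⟨t.1, by have := t.isLt; omega⟩
      ⟨M - 1, by have := t.isLt; omega⟩).prod

/-- The action of `Δ^{(M-1)}(f₀)` on the tensor product of evaluation representations
with parameters `ζ 0, …, ζ (M-1)`:
`π(f₀) = Σ_j 1^{⊗j} ⊗ π_{ζ_j}(f₀) ⊗ π(t₀⁻¹) ⊗ ⋯ ⊗ π(t₀⁻¹)`, where
`π_ζ(f₀)v₊ = 0`, `π_ζ(f₀)v₋ = ζ⁻¹v₊`, `π_ζ(t₀⁻¹)v₊ = q v₊`, `π_ζ(t₀⁻¹)v₋ = q⁻¹ v₋`. -/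
def f0op (q : ℂ) (M : ℕ) (ζ : ℕ → ℂ) : Matrix (Fin M → Fin 2) (Fin M → Fin 2) ℂ :=
  ∑ j : Fin M, Matrix.of fun a b =>
    (if a j = 0 ∧ b j = 1 then (ζ j.1)⁻¹ else 0) *
      ∏ i : Fin M,
        (if i < j then (if a i = b i then 1 else 0)
         else if j < i then (if a i = b i then (if b i = 0 then q else q⁻¹) else 0)
         else 1)

/-- `M = tr_{N−1}( D̄_{N−1} R_{1,…,N−2|N−1}(ζ₁,…,ζ_{N−2}|ζ_{N−1}) ) ∈ End(V^{⊗(N−2)})`: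
partial trace over the last factor of `V^{⊗(N-1)}`. -/
def Mop (q δ : ℂ) (N : ℕ) (hN : 3 ≤ N) (ζ : ℕ → ℂ) :
    Matrix (Fin (N - 2) → Fin 2) (Fin (N - 2) → Fin 2) ℂ :=
  Matrix.of fun a b => ∑ e : Fin 2,
    (embed1 (N := N - 1) (Dbar δ) ⟨N - 2, by omega⟩ * RchainUp q (N - 1) ζ (ζ (N - 2)))
      (fun i => if h : i.1 < N - 2 then a ⟨i.1, h⟩ else e)
      (fun i => if h : i.1 < N - 2 then b ⟨i.1, h⟩ else e)

/-- `f(z) = (q⁵z;q⁴,q⁴)_∞ (q⁵/z;q⁴,q⁴)_∞ / ((q³z;q⁴,q⁴)_∞ (q³/z;q⁴,q⁴)_∞)`. -/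
def ffun (q z : ℂ) : ℂ :=
  qPoch2 (q ^ 5 * z) (q ^ 4) * qPoch2 (q ^ 5 / z) (q ^ 4) /
    (qPoch2 (q ^ 3 * z) (q ^ 4) * qPoch2 (q ^ 3 / z) (q ^ 4))

/-- `u = (−1)^{N−m} s^{N−6m} (∏_μ x_μ)(∏_k ξ_k) / (∏_j ζ_j)`, where `s² = q⁻¹`
(so that `s^{N-6m}` realizes `τ^{N/2-3m}` with `τ = q⁻¹`). -/
def uu (s : ℂ) (N m : ℕ) (ξ x ζ : ℕ → ℂ) : ℂ :=
  (-1) ^ (N - m) * s ^ ((N : ℤ) - 6 * (m : ℤ)) *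
    (∏ μ ∈ Finset.range m, x μ) * (∏ k ∈ Finset.range (N - 2 * m), ξ k) /
    (∏ j ∈ Finset.range N, ζ j)

/-- The explicit kernel
`ϑ_ε(x₁,…,x_m|ζ₁,…,ζ_N) = (∏_j ζ_j^{N−2m}) (∏_{μ<ν} x_μ θ(x_ν/x_μ|q²))
  ε^N θ(−εu|q²) (∏_{k,μ} θ(ξ_k²/x_μ|q⁴)) (∏_{j,k} f(z_j/ξ_k²))`, `z_j = ζ_j²`. -/
def vth (q s : ℂ) (N m : ℕ) (ξ : ℕ → ℂ) (ε : ℂ) (x ζ : ℕ → ℂ) : ℂ :=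
  (∏ j ∈ Finset.range N, ζ j ^ (N - 2 * m)) *
    (∏ μ ∈ Finset.range m, ∏ ν ∈ Finset.Ioo μ m, x μ * theta (x ν / x μ) (q ^ 2)) *
    (ε ^ N * theta (-ε * uu s N m ξ x ζ) (q ^ 2)) *
    (∏ k ∈ Finset.range (N - 2 * m), ∏ μ ∈ Finset.range m, theta (ξ k ^ 2 / x μ) (q ^ 4)) *
    (∏ j ∈ Finset.range N, ∏ k ∈ Finset.range (N - 2 * m), ffun q (ζ j ^ 2 / ξ k ^ 2))


/-! ### Auxiliary lemmas -/

section Aux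

open Filter

private lemma hasProd_of_zero' {ι : Type*} {f : ι → ℂ} (i0 : ι) (h : f i0 = 0) : HasProd f 0 := by
  unfold HasProd
  have hev : ∀ᶠ s : Finset ι in atTop, ∏ i ∈ s, f i = 0 := by
    filter_upwards [eventually_ge_atTop ({i0} : Finset ι)] with s hs
    exact Finset.prod_eq_zero (hs (Finset.mem_singleton_self i0)) h
  exact tendsto_const_nhds.congr' (hev.mono fun s hs => hs.symm)

private lemma summable_log' {ι : Type*} {g : ι → ℂ} (hg : Summable fun i => ‖g i‖) :
    Summable fun i => Complex.log (1 - g i) := by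
  refine Summable.of_norm_bounded_eventually (g := fun i => 3/2 * ‖g i‖) (hg.mul_left _) ?_
  have h0 : ∀ᶠ i in cofinite, ‖g i‖ ≤ 1/2 :=
    hg.tendsto_cofinite_zero.eventually (eventually_le_nhds (by norm_num))
  filter_upwards [h0] with i hi
  have h1 : (1 : ℂ) - g i = 1 + (-g i) := by ring
  rw [h1]
  simpa using Complex.norm_log_one_add_half_le_self (z := -g i) (by simpa using hi)

private lemma multipliable_one_sub' {ι : Type*} {g : ι → ℂ} (hg : Summable fun i => ‖g i‖) :
    Multipliable fun i => 1 - g i := by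
  by_cases h : ∃ i, 1 - g i = 0
  · obtain ⟨i0, h0⟩ := h
    exact ⟨0, hasProd_of_zero' i0 h0⟩
  · push_neg at h
    exact Complex.multipliable_of_summable_log (summable_log' hg)

private lemma sum_geo1 (a p : ℂ) (hp : ‖p‖ < 1) :
    Summable fun k : ℕ => ‖a * p ^ k‖ := by
  have := (summable_geometric_of_lt_one (norm_nonneg p)
    hp).mul_left ‖a‖
  simpa [norm_mul, norm_pow] using this

private lemma sum_geo2 (a p : ℂ) (hp : ‖p‖ < 1) :
    Summable fun kl : ℕ × ℕ => ‖a * p ^ (kl.1 + kl.2)‖ := by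
  have h1 : Summable fun k : ℕ => ‖a‖ * ‖p‖ ^ k := by
    simpa [norm_mul, norm_pow] using sum_geo1 a p hp
  have h2 : Summable fun k : ℕ => ‖p‖ ^ k :=
    summable_geometric_of_lt_one (norm_nonneg p) hp
  have := h1.mul_of_nonneg h2 (fun k => by positivity) (fun k => by positivity)
  refine this.congr fun kl => ?_
  simp [norm_mul, norm_pow, pow_add]
  ring

private lemma multQ (a p : ℂ) (hp : ‖p‖ < 1) :
    Multipliable fun k : ℕ => 1 - a * p ^ k :=
  multipliable_one_sub' (sum_geo1 a p hp)

private lemma multQ2 (a p : ℂ) (hp : ‖p‖ < 1) :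
    Multipliable fun kl : ℕ × ℕ => 1 - a * p ^ (kl.1 + kl.2) :=
  multipliable_one_sub' (sum_geo2 a p hp)

private lemma qPoch_shift (a p : ℂ) (hp : ‖p‖ < 1) :
    qPoch a p = (1 - a) * qPoch (a * p) p := by
  have hm : Multipliable fun n : ℕ => 1 - a * p ^ (n + 1) :=
    (multQ (a * p) p hp).congr fun n => by ring_nf
  have h := tprod_eq_zero_mul' (f := fun k : ℕ => 1 - a * p ^ k) hm
  unfold qPoch
  rw [h]
  simp only [pow_zero, mul_one]
  congr 1
  exact (tprod_congr fun n => by ring_nf).symm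

private def Sset : Set (ℕ × ℕ) := {kl | kl.1 = 0}

private def eqv1 : ℕ ≃ Sset where
  toFun l := ⟨(0, l), rfl⟩
  invFun x := x.1.2
  left_inv l := rfl
  right_inv x := by
    rcases x with ⟨⟨k, l⟩, hk⟩
    have : k = 0 := hk
    subst this; rfl

private def eqv2 : ℕ × ℕ ≃ ↥Ssetᶜ where
  toFun kl := ⟨(kl.1 + 1, kl.2), by simp [Sset]⟩
  invFun x := (x.1.1 - 1, x.1.2)
  left_inv kl := by simp
  right_inv x := by
    rcases x with ⟨⟨k, l⟩, hk⟩
    have hk' : k ≠ 0 := hk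
    have : k - 1 + 1 = k := Nat.succ_pred_eq_of_pos (Nat.pos_of_ne_zero hk')
    simp [this]

private lemma qPoch2_shift (a p : ℂ) (hp : ‖p‖ < 1) :
    qPoch2 a p = qPoch a p * qPoch2 (a * p) p := by
  classical
  set f : ℕ × ℕ → ℂ := fun kl => 1 - a * p ^ (kl.1 + kl.2) with hf
  have h1 : Multipliable ((f ∘ (↑)) : Sset → ℂ) := by
    rw [← eqv1.multipliable_iff]
    exact (multQ a p hp).congr fun l => by simp [hf, eqv1, Function.comp]
  have h2 : Multipliable ((f ∘ (↑)) : ↥Ssetᶜ → ℂ) := by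
    rw [← eqv2.multipliable_iff]
    refine (multQ2 (a * p) p hp).congr fun kl => ?_
    simp only [hf, eqv2, Function.comp, Equiv.coe_fn_mk]
    ring_nf
  have hsplit := Multipliable.tprod_mul_tprod_compl (f := f) h1 h2
  have hA : (∏' x : Sset, f x) = qPoch a p := by
    rw [← Equiv.tprod_eq eqv1 (fun x : Sset => f x)]
    exact tprod_congr fun l => by simp [hf, eqv1]
  have hB : (∏' x : ↥Ssetᶜ, f x) = qPoch2 (a * p) p := by
    rw [← Equiv.tprod_eq eqv2 (fun x : ↥Ssetᶜ => f x)]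
    refine tprod_congr fun kl => ?_
    simp only [hf, eqv2, Equiv.coe_fn_mk]
    ring_nf
  rw [← hA, ← hB]
  exact hsplit.symm

private lemma theta_shift (z p : ℂ) (hp : ‖p‖ < 1) (hp0 : p ≠ 0) (hz : z ≠ 0) :
    theta (p * z) p = -z⁻¹ * theta z p := by
  have h1 : p / (p * z) = z⁻¹ := by field_simp
  have h2 : z⁻¹ * p = p / z := by rw [div_eq_mul_inv]; ring
  rw [theta, theta, h1, qPoch_shift z⁻¹ p hp, qPoch_shift z p hp, h2]
  have h3 : (1 - z⁻¹) = -z⁻¹ * (1 - z) := by field_simp; ring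
  rw [h3]
  have h4 : p * z = z * p := mul_comm _ _
  rw [h4]
  ring

private lemma theta_inv (z p : ℂ) (hp : ‖p‖ < 1) (hp0 : p ≠ 0) (hz : z ≠ 0) :
    theta z⁻¹ p = -z⁻¹ * theta z p := by
  have h1 : p / z⁻¹ = z * p := by field_simp
  have h2 : z⁻¹ * p = p / z := by rw [div_eq_mul_inv]; ring
  rw [theta, theta, h1, qPoch_shift z⁻¹ p hp, qPoch_shift z p hp, h2]
  have h3 : (1 - z⁻¹) = -z⁻¹ * (1 - z) := by field_simp; ring
  rw [h3]
  ring

private lemma ffun_shift (q z : ℂ) (hq : ‖q‖ < 1) (hq0 : q ≠ 0) (hz : z ≠ 0)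
    (hA : qPoch2 (q ^ 3 * z) (q ^ 4) ≠ 0) (hB : qPoch2 (q ^ 3 / z) (q ^ 4) ≠ 0)
    (hT : theta (q / z) (q ^ 4) ≠ 0) :
    ffun q (z / q ^ 4)
      = (-(q / z) * theta (q * z) (q ^ 4) / theta (q / z) (q ^ 4)) * ffun q z := by
  have hp : ‖q ^ 4‖ < 1 := by
    rw [norm_pow]
    exact pow_lt_one₀ (norm_nonneg q) hq (by norm_num)
  have hp0 : (q ^ 4 : ℂ) ≠ 0 := pow_ne_zero _ hq0
  have a1 : q ^ 5 * (z / q ^ 4) = q * z := by field_simp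
  have a2 : q ^ 5 / (z / q ^ 4) = q ^ 9 / z := by field_simp
  have a3 : q ^ 3 * (z / q ^ 4) = z / q := by field_simp
  have a4 : q ^ 3 / (z / q ^ 4) = q ^ 7 / z := by field_simp
  have F1 : qPoch2 (q * z) (q ^ 4) = qPoch (q * z) (q ^ 4) * qPoch2 (q ^ 5 * z) (q ^ 4) := by
    have := qPoch2_shift (q * z) (q ^ 4) hp
    rwa [show q * z * q ^ 4 = q ^ 5 * z by ring] at this
  have F2 : qPoch2 (z / q) (q ^ 4) = qPoch (z / q) (q ^ 4) * qPoch2 (q ^ 3 * z) (q ^ 4) := by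
    have := qPoch2_shift (z / q) (q ^ 4) hp
    rwa [show z / q * q ^ 4 = q ^ 3 * z by field_simp] at this
  have F3 : qPoch2 (q ^ 5 / z) (q ^ 4)
      = qPoch (q ^ 5 / z) (q ^ 4) * qPoch2 (q ^ 9 / z) (q ^ 4) := by
    have := qPoch2_shift (q ^ 5 / z) (q ^ 4) hp
    rwa [show q ^ 5 / z * q ^ 4 = q ^ 9 / z by field_simp] at this
  have F4 : qPoch2 (q ^ 3 / z) (q ^ 4)
      = qPoch (q ^ 3 / z) (q ^ 4) * qPoch2 (q ^ 7 / z) (q ^ 4) := by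
    have := qPoch2_shift (q ^ 3 / z) (q ^ 4) hp
    rwa [show q ^ 3 / z * q ^ 4 = q ^ 7 / z by field_simp] at this
  have T1 : theta (q * z) (q ^ 4) = qPoch (q * z) (q ^ 4) * qPoch (q ^ 3 / z) (q ^ 4) := by
    rw [theta, show q ^ 4 / (q * z) = q ^ 3 / z by field_simp]
  have T2 : theta (z / q) (q ^ 4) = qPoch (z / q) (q ^ 4) * qPoch (q ^ 5 / z) (q ^ 4) := by
    rw [theta, show q ^ 4 / (z / q) = q ^ 5 / z by field_simp]
  have Trel : theta (z / q) (q ^ 4) = -(z / q) * theta (q / z) (q ^ 4) := by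
    have := theta_inv (q / z) (q ^ 4) hp hp0 (div_ne_zero hq0 hz)
    rwa [show (q / z)⁻¹ = z / q by field_simp] at this
  have hB1 : qPoch (q ^ 3 / z) (q ^ 4) ≠ 0 := fun h => hB (by rw [F4, h, zero_mul])
  have hB2 : qPoch2 (q ^ 7 / z) (q ^ 4) ≠ 0 := fun h => hB (by rw [F4, h, mul_zero])
  have hTz : theta (z / q) (q ^ 4) ≠ 0 := by
    rw [Trel]
    exact mul_ne_zero (neg_ne_zero.mpr (div_ne_zero hz hq0)) hT
  have hz1 : qPoch (z / q) (q ^ 4) ≠ 0 := fun h => hTz (by rw [T2, h, zero_mul])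
  have hz2 : qPoch (q ^ 5 / z) (q ^ 4) ≠ 0 := fun h => hTz (by rw [T2, h, mul_zero])
  have key : qPoch (z / q) (q ^ 4) * qPoch (q ^ 5 / z) (q ^ 4)
      = -(z / q) * theta (q / z) (q ^ 4) := by rw [← T2, Trel]
  have key2 : theta (q / z) (q ^ 4)
      = -(q / z) * (qPoch (z / q) (q ^ 4) * qPoch (q ^ 5 / z) (q ^ 4)) := by
    rw [key]
    field_simp
  rw [ffun, ffun, a1, a2, a3, a4, F1, F2, F3, F4, T1, key2]
  rw [div_mul_div_comm]
  have hneg : -(q / z) ≠ 0 := neg_ne_zero.mpr (div_ne_zero hq0 hz)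
  rw [div_eq_div_iff (mul_ne_zero (mul_ne_zero hz1 hA) hB2)
    (mul_ne_zero (mul_ne_zero hneg (mul_ne_zero hz1 hz2))
      (mul_ne_zero hA (mul_ne_zero hB1 hB2)))]
  ring

end Aux

/-- Quasi-periodicity of the kernel `ϑ` in the spectral parameters:
`ϑ_ε(x|ζ₁,…,ζ_j q⁻²,…,ζ_N) = s^N r_ε(ζ_j) (∏_μ (−z_j q⁻¹/x_μ)) (∏_{k≠j} ζ_k/ζ_j) ϑ_ε(x|ζ)`,
where `r_ε(ζ) = ε ∏_k t(ζ/ξ_k)` and `t(ζ) = ζ⁻¹ θ(qζ²|q⁴)/θ(qζ⁻²|q⁴)`. -/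
theorem vth_z_quasi_periodicity (q : ℂ) (hq0 : 0 < ‖q‖) (hq1 : ‖q‖ < 1)
    (N m : ℕ) (hN : 1 ≤ N) (hm : 2 * m ≤ N)
    (ξ : ℕ → ℂ) (hξ : ∀ k < N - 2 * m, ξ k ≠ 0)
    (s : ℂ) (hs : s ^ 2 = q⁻¹) (ε : ℂ) (hε : ε = 1 ∨ ε = -1)
    (x ζ : ℕ → ℂ) (hx : ∀ ν < m, x ν ≠ 0) (hζ : ∀ j < N, ζ j ≠ 0)
    (hden : ∀ j < N, ∀ k < N - 2 * m,
      qPoch2 (q ^ 3 * (ζ j ^ 2 / ξ k ^ 2)) (q ^ 4) ≠ 0 ∧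
      qPoch2 (q ^ 3 / (ζ j ^ 2 / ξ k ^ 2)) (q ^ 4) ≠ 0)
    (j0 : ℕ) (hj0 : j0 < N)
    (hdent : ∀ k < N - 2 * m, theta (q * ((ζ j0 / ξ k) ^ 2)⁻¹) (q ^ 4) ≠ 0) :
    vth q s N m ξ ε x (fun j => if j = j0 then ζ j0 / q ^ 2 else ζ j)
      = s ^ N * (ε * ∏ k ∈ Finset.range (N - 2 * m), tfun q (ζ j0 / ξ k)) *
          (∏ μ ∈ Finset.range m, (-(ζ j0 ^ 2) / q / x μ)) *
          (∏ k ∈ (Finset.range N).erase j0, ζ k / ζ j0) * vth q s N m ξ ε x ζ := by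
  classical
  have hq : q ≠ 0 := by
    intro h; rw [h] at hq0; simp at hq0
  have hs0 : s ≠ 0 := by
    intro h
    rw [h, pow_two, mul_zero] at hs
    exact hq (inv_eq_zero.mp hs.symm)
  have hζ0 : ζ j0 ≠ 0 := hζ j0 hj0
  have hε0 : ε ≠ 0 := by rcases hε with h | h <;> simp [h]
  have hε2 : ε * ε = 1 := by rcases hε with h | h <;> norm_num [h]
  have hj0r : j0 ∈ Finset.range N := Finset.mem_range.mpr hj0
  set K := N - 2 * m with hKdef
  set ζ' : ℕ → ℂ := fun j => if j = j0 then ζ j0 / q ^ 2 else ζ j with hζ'def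
  set X := ∏ μ ∈ Finset.range m, x μ with hXdef
  set Ξ := ∏ k ∈ Finset.range K, ξ k with hΞdef
  set EP := ∏ k ∈ (Finset.range N).erase j0, ζ k with hEPdef
  have hXne : X ≠ 0 := Finset.prod_ne_zero_iff.mpr fun μ hμ => hx μ (Finset.mem_range.mp hμ)
  have hΞne : Ξ ≠ 0 := Finset.prod_ne_zero_iff.mpr fun k hk => hξ k (Finset.mem_range.mp hk)
  have hEPne : EP ≠ 0 := Finset.prod_ne_zero_iff.mpr fun k hk =>
    hζ k (Finset.mem_range.mp (Finset.mem_of_mem_erase hk))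
  have hPsplit : ∏ j ∈ Finset.range N, ζ j = ζ j0 * EP :=
    (Finset.mul_prod_erase _ _ hj0r).symm
  have hζ'erase : ∀ i ∈ (Finset.range N).erase j0, ζ' i = ζ i := fun i hi => by
    rw [hζ'def]; simp only [if_neg (Finset.ne_of_mem_erase hi)]
  have hζ'j0 : ζ' j0 = ζ j0 / q ^ 2 := by simp [hζ'def]
  -- factor A
  have hAfac : (∏ j ∈ Finset.range N, ζ' j ^ K)
      = (1 / q ^ 2) ^ K * ∏ j ∈ Finset.range N, ζ j ^ K := by
    rw [← Finset.mul_prod_erase _ (fun j => ζ' j ^ K) hj0r,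
        ← Finset.mul_prod_erase _ (fun j => ζ j ^ K) hj0r]
    rw [Finset.prod_congr rfl fun i hi => by rw [hζ'erase i hi]]
    rw [hζ'j0, div_pow]
    ring
  -- factor uu
  have huuP : uu s N m ξ x ζ' = q ^ 2 * uu s N m ξ x ζ := by
    rw [uu, uu]
    have h2 : ∏ j ∈ Finset.range N, ζ' j = ζ j0 / q ^ 2 * EP := by
      rw [← Finset.mul_prod_erase _ ζ' hj0r,
        Finset.prod_congr rfl hζ'erase, hζ'j0]
    rw [h2, hPsplit]
    field_simp
  have hzpow : s ^ ((N : ℤ) - 6 * (m : ℤ)) = s ^ N * q ^ (3 * m) := by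
    have h6 : (6 : ℤ) * (m : ℤ) = ((6 * m : ℕ) : ℤ) := by push_cast; ring
    rw [h6, zpow_sub₀ hs0, zpow_natCast, zpow_natCast]
    have h7 : s ^ (6 * m) = (q ^ (3 * m))⁻¹ := by
      rw [show 6 * m = 2 * (3 * m) by ring, pow_mul, hs, inv_pow]
    rw [h7, div_eq_mul_inv, inv_inv]
  have huu : uu s N m ξ x ζ
      = (-1) ^ (N - m) * (s ^ N * q ^ (3 * m)) * X * Ξ / (ζ j0 * EP) := by
    rw [uu, hzpow, hPsplit]
  have huune : uu s N m ξ x ζ ≠ 0 := by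
    rw [huu]
    apply div_ne_zero
    · exact mul_ne_zero (mul_ne_zero (mul_ne_zero (pow_ne_zero _ (by norm_num))
        (mul_ne_zero (pow_ne_zero _ hs0) (pow_ne_zero _ hq))) hXne) hΞne
    · exact mul_ne_zero hζ0 hEPne
  -- factor theta
  have hp2a : ‖q ^ 2‖ < 1 := by
    rw [norm_pow]; exact pow_lt_one₀ (norm_nonneg q) hq1 (by norm_num)
  have hp20 : (q ^ 2 : ℂ) ≠ 0 := pow_ne_zero _ hq
  have hth : theta (-ε * uu s N m ξ x ζ') (q ^ 2)
      = -(-ε * uu s N m ξ x ζ)⁻¹ * theta (-ε * uu s N m ξ x ζ) (q ^ 2) := by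
    rw [huuP, show -ε * (q ^ 2 * uu s N m ξ x ζ) = q ^ 2 * (-ε * uu s N m ξ x ζ) by ring]
    exact theta_shift _ _ hp2a hp20 (mul_ne_zero (neg_ne_zero.mpr hε0) huune)
  -- factor f
  have hffk : ∀ k ∈ Finset.range K, ffun q (ζ' j0 ^ 2 / ξ k ^ 2)
      = (-q * (ξ k / ζ j0) * tfun q (ζ j0 / ξ k)) * ffun q (ζ j0 ^ 2 / ξ k ^ 2) := by
    intro k hk'
    have hkK : k < K := Finset.mem_range.mp hk'
    have hξk : ξ k ≠ 0 := hξ k hkK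
    set z := ζ j0 ^ 2 / ξ k ^ 2 with hzdef
    have hzne : z ≠ 0 := div_ne_zero (pow_ne_zero _ hζ0) (pow_ne_zero _ hξk)
    have harg : ζ' j0 ^ 2 / ξ k ^ 2 = z / q ^ 4 := by
      rw [hζ'j0, hzdef]; field_simp
    have hw2 : (ζ j0 / ξ k) ^ 2 = z := by rw [hzdef, div_pow]
    have hT' : theta (q / z) (q ^ 4) ≠ 0 := by
      have h9 := hdent k hkK
      rwa [hw2, ← div_eq_mul_inv] at h9
    have h8 := ffun_shift q z hq1 hq hzne (hden j0 hj0 k hkK).1 (hden j0 hj0 k hkK).2 hT'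
    rw [harg, h8]
    congr 1
    rw [tfun, hw2, ← div_eq_mul_inv q z, inv_div]
    have hscal : -(q / z) = -q * (ξ k / ζ j0) * (ξ k / ζ j0) := by
      rw [hzdef]; field_simp
    linear_combination (theta (q * z) (q ^ 4) / theta (q / z) (q ^ 4)) * hscal
  have hEfac : (∏ j ∈ Finset.range N, ∏ k ∈ Finset.range K, ffun q (ζ' j ^ 2 / ξ k ^ 2))
      = ((-q / ζ j0) ^ K * Ξ * ∏ k ∈ Finset.range K, tfun q (ζ j0 / ξ k)) *
        ∏ j ∈ Finset.range N, ∏ k ∈ Finset.range K, ffun q (ζ j ^ 2 / ξ k ^ 2) := by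
    rw [← Finset.mul_prod_erase _ (fun j => ∏ k ∈ Finset.range K, ffun q (ζ' j ^ 2 / ξ k ^ 2))
        hj0r,
      ← Finset.mul_prod_erase _ (fun j => ∏ k ∈ Finset.range K, ffun q (ζ j ^ 2 / ξ k ^ 2)) hj0r]
    rw [Finset.prod_congr rfl fun i hi =>
      Finset.prod_congr rfl fun k _ => by rw [hζ'erase i hi]]
    rw [Finset.prod_congr rfl hffk, Finset.prod_mul_distrib, Finset.prod_mul_distrib,
      Finset.prod_mul_distrib, Finset.prod_const, Finset.card_range]
    have hxi : (∏ k ∈ Finset.range K, (ξ k / ζ j0)) = Ξ / ζ j0 ^ K := by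
      rw [Finset.prod_div_distrib, Finset.prod_const, Finset.card_range, hΞdef]
    rw [hxi, div_pow]
    ring
  -- RHS simple products
  have hxprod : (∏ μ ∈ Finset.range m, (-(ζ j0 ^ 2) / q / x μ)) = (-(ζ j0 ^ 2) / q) ^ m / X := by
    rw [Finset.prod_div_distrib, Finset.prod_const, Finset.card_range, hXdef]
  have hzprod : (∏ k ∈ (Finset.range N).erase j0, ζ k / ζ j0) = EP / ζ j0 ^ (N - 1) := by
    rw [Finset.prod_div_distrib, Finset.prod_const, Finset.card_erase_of_mem hj0r,
      Finset.card_range, hEPdef]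
  -- the scalar identity
  have hsc : (1 / q ^ 2) ^ K * (-(-ε * uu s N m ξ x ζ)⁻¹) * ((-q / ζ j0) ^ K * Ξ)
      = s ^ N * ε * ((-(ζ j0 ^ 2) / q) ^ m / X) * (EP / ζ j0 ^ (N - 1)) := by
    rw [huu]
    have hKN : K + 2 * m = N := by omega
    have hNm : N - m = K + m := by omega
    have hqN : (q : ℂ) ^ N = q ^ K * q ^ m * q ^ m := by
      rw [← hKN, pow_add, two_mul, pow_add]; ring
    have hsN : s ^ N * s ^ N = (q ^ K * q ^ m * q ^ m)⁻¹ := by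
      rw [← hqN]
      calc s ^ N * s ^ N = (s ^ 2) ^ N := by rw [← pow_mul, two_mul, pow_add]
        _ = (q ^ N)⁻¹ := by rw [hs, inv_pow]
    have hz1 : ζ j0 ^ (N - 1) * ζ j0 = ζ j0 ^ K * ζ j0 ^ (2 * m) := by
      rw [← pow_succ, ← pow_add]
      congr 1
      omega
    have hvK : ((-1 : ℂ)) ^ K * (-1) ^ K = 1 := by rw [← mul_pow]; norm_num
    have hvm : ((-1 : ℂ)) ^ m * (-1) ^ m = 1 := by rw [← mul_pow]; norm_num
    rw [hNm, pow_add,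
      show (-q / ζ j0) ^ K = (-1) ^ K * (q ^ K / ζ j0 ^ K) from by
        rw [neg_div, neg_pow, div_pow],
      show (-(ζ j0 ^ 2) / q) ^ m = (-1) ^ m * ((ζ j0 ^ 2) ^ m / q ^ m) from by
        rw [neg_div, neg_pow, div_pow]]
    rw [show -ε * ((-1) ^ K * (-1) ^ m * (s ^ N * q ^ (3 * m)) * X * Ξ / (ζ j0 * EP))
        = (-ε * ((-1) ^ K * (-1) ^ m * (s ^ N * q ^ (3 * m)) * X * Ξ)) / (ζ j0 * EP) from by
        ring, inv_div]
    have hW2 : ((-1 : ℂ) ^ K * (-1) ^ m * (s ^ N * q ^ (3 * m)) * X * Ξ) ≠ 0 := by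
      apply mul_ne_zero (mul_ne_zero (mul_ne_zero (mul_ne_zero (pow_ne_zero _ (by norm_num))
        (pow_ne_zero _ (by norm_num))) (mul_ne_zero (pow_ne_zero _ hs0) (pow_ne_zero _ hq))) hXne) hΞne
    have hW : (-ε * ((-1) ^ K * (-1) ^ m * (s ^ N * q ^ (3 * m)) * X * Ξ)) ≠ 0 :=
      mul_ne_zero (neg_ne_zero.mpr hε0) hW2
    have hsN' : s ^ N * s ^ N * (q ^ K * q ^ m * q ^ m) = 1 := by
      rw [hsN]
      exact inv_mul_cancel₀ (by
        exact mul_ne_zero (mul_ne_zero (pow_ne_zero _ hq) (pow_ne_zero _ hq)) (pow_ne_zero _ hq))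
    have hr : (1 / q ^ 2) ^ K * q ^ K * q ^ K = 1 := by
      rw [← mul_pow, ← mul_pow, show 1 / q ^ 2 * q * q = 1 by field_simp, one_pow]
    field_simp
    linear_combination
      ((1 / q ^ 2) ^ K * q ^ K * q ^ m) * hz1 -
      ((1 / q ^ 2) ^ K * q ^ K * q ^ m * (ζ j0 ^ K * ζ j0 ^ (2 * m))) * hsN' +
      ((s ^ N) ^ 2 * q ^ (3 * m) * (ζ j0 ^ K * ζ j0 ^ (2 * m))) * hr -
      ((s ^ N) ^ 2 * q ^ (3 * m) * (ζ j0 ^ K * ζ j0 ^ (2 * m))) * hε2 -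
      (ε ^ 2 * (s ^ N) ^ 2 * q ^ (3 * m) * (ζ j0 ^ K * ζ j0 ^ (2 * m))) * hvm
  simp only [vth, ← hKdef]
  rw [hAfac, hth, hEfac, hxprod, hzprod]
  linear_combination ((∏ j ∈ Finset.range N, ζ j ^ K) *
      (∏ μ ∈ Finset.range m, ∏ ν ∈ Finset.Ioo μ m, x μ * theta (x ν / x μ) (q ^ 2)) *
      (ε ^ N * theta (-ε * uu s N m ξ x ζ) (q ^ 2)) *
      (∏ k ∈ Finset.range K, ∏ μ ∈ Finset.range m, theta (ξ k ^ 2 / x μ) (q ^ 4)) *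
      (∏ j ∈ Finset.range N, ∏ k ∈ Finset.range K, ffun q (ζ j ^ 2 / ξ k ^ 2)) *
      (∏ k ∈ Finset.range K, tfun q (ζ j0 / ξ k))) * hsc
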